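/- Let h : A → B be a bounded linear map between C*-algebras satisfying h(a*a) = h(a)*h(a) for all a ∈ A and h((a*a)^k) = (h(a*a))^k for all a ∈ A. Then for every a ∈ A, ‖h(a)‖^(4k+2) ≤ ‖h‖⁴ · ‖a‖^(4k+2). -/

import Mathlib

theorem stmt_14 {A B : Type*}
    [NormedRing A] [StarRing A] [CStarRing A] [NormedAlgebra ℂ A] [CompleteSpace A] [StarModule ℂ A]
    [NormedRing B] [StarRing B] [CStarRing B] [NormedAlgebra ℂ B] [CompleteSpace B] [StarModule ℂ B]
    (h : A →L[ℂ] B)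
    (hmul : ∀ a : A, h (star a * a) = star (h a) * h a)
    (k : ℕ)
    (hpow : ∀ a : A, h ((star a * a) ^ k) = (h (star a * a)) ^ k) :
    ∀ a : A, ‖h a‖ ^ (4 * k + 2) ≤ ‖h‖ ^ 4 * ‖a‖ ^ (4 * k + 2) := by
  have key : ∀ n : ℕ, ∀ x : A, ‖h x‖ ^ (2 ^ n) ≤ ‖h‖ * ‖x‖ ^ (2 ^ n) := by
    intro n
    induction n with
    | zero => intro x; simpa using h.le_opNorm x
    | succ n ih =>
      intro x
      have e : 2 ^ (n + 1) = 2 * 2 ^ n := by ring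
      have h1 : ‖h x‖ ^ 2 = ‖h (star x * x)‖ := by
        rw [hmul, CStarRing.norm_star_mul_self, sq]
      have h2 : ‖star x * x‖ = ‖x‖ ^ 2 := by
        rw [CStarRing.norm_star_mul_self, sq]
      calc ‖h x‖ ^ 2 ^ (n + 1) = (‖h x‖ ^ 2) ^ 2 ^ n := by rw [← pow_mul, e]
        _ = ‖h (star x * x)‖ ^ 2 ^ n := by rw [h1]
        _ ≤ ‖h‖ * ‖star x * x‖ ^ 2 ^ n := ih _
        _ = ‖h‖ * (‖x‖ ^ 2) ^ 2 ^ n := by rw [h2]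
        _ = ‖h‖ * ‖x‖ ^ 2 ^ (n + 1) := by rw [← pow_mul, e]
  have contr : ∀ x : A, ‖h x‖ ≤ ‖x‖ := by
    intro x
    by_contra hcon
    push_neg at hcon
    have hx0 : 0 < ‖x‖ := by
      rcases (norm_nonneg x).lt_or_eq with hx | hx
      · exact hx
      · exfalso
        have hx' : x = 0 := norm_eq_zero.mp hx.symm
        rw [hx', map_zero, norm_zero] at hcon
        exact absurd hcon (by simp)
    set r := ‖h x‖ / ‖x‖ with hr_def
    have hr : 1 < r := (one_lt_div hx0).2 hcon
    have hrn : ∀ n : ℕ, r ^ (2 ^ n) ≤ ‖h‖ := by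
      intro n
      have hk := key n x
      rw [hr_def, div_pow, div_le_iff₀ (pow_pos hx0 _)]
      linarith
    obtain ⟨N, hN⟩ := pow_unbounded_of_one_lt ‖h‖ hr
    have hNle : r ^ N ≤ r ^ (2 ^ N) :=
      pow_le_pow_right₀ hr.le (Nat.le_of_lt (Nat.lt_two_pow_self (n := N)))
    linarith [hrn N]
  intro a
  rcases Nat.eq_zero_or_pos k with hk | hk
  · subst hk
    simp only [Nat.mul_zero, Nat.zero_add]
    have h1B : h 1 = 1 := by simpa using hpow 0
    rcases subsingleton_or_nontrivial B with hB | hB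
    · have hz : h a = 0 := Subsingleton.elim _ _
      rw [hz, norm_zero]
      have h0 : (0:ℝ) ^ 2 = 0 := by norm_num
      rw [h0]
      positivity
    · rcases subsingleton_or_nontrivial A with hA | hA
      · have hz : a = 0 := Subsingleton.elim a 0
        rw [hz, map_zero, norm_zero]
        have h0 : (0:ℝ) ^ 2 = 0 := by norm_num
        rw [h0]
        positivity
      · have hn1 : (1 : ℝ) ≤ ‖h‖ := by
          have hle := h.le_opNorm (1 : A)
          rw [h1B, norm_one, norm_one, mul_one] at hle
          exact hle
        have hb := h.le_opNorm a
        have h2 : ‖h a‖ ^ 2 ≤ ‖h‖ ^ 2 * ‖a‖ ^ 2 := by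
          nlinarith [norm_nonneg (h a), norm_nonneg a, h.opNorm_nonneg]
        have h4 : ‖h‖ ^ 2 ≤ ‖h‖ ^ 4 := pow_le_pow_right₀ hn1 (by norm_num)
        have h3 : ‖h‖ ^ 2 * ‖a‖ ^ 2 ≤ ‖h‖ ^ 4 * ‖a‖ ^ 2 :=
          mul_le_mul_of_nonneg_right h4 (sq_nonneg ‖a‖)
        linarith
  · have hc := contr a
    have hb := h.le_opNorm a
    have e : 4 * k + 2 = 4 + (4 * k - 2) := by omega
    calc ‖h a‖ ^ (4 * k + 2) = ‖h a‖ ^ 4 * ‖h a‖ ^ (4 * k - 2) := by rw [e, pow_add]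
      _ ≤ (‖h‖ * ‖a‖) ^ 4 * ‖a‖ ^ (4 * k - 2) := by
          apply mul_le_mul (pow_le_pow_left₀ (norm_nonneg _) hb 4)
            (pow_le_pow_left₀ (norm_nonneg _) hc _)
            (pow_nonneg (norm_nonneg _) _) (pow_nonneg (by positivity) _)
      _ = ‖h‖ ^ 4 * ‖a‖ ^ (4 * k + 2) := by
          rw [mul_pow, mul_assoc, ← pow_add]
          congr 2
          omega
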